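/- (Lemma B.1.) Let c_-, c_+, θ_-, θ, θ_+ be integers with θ_- < θ < θ_+ and c_- < θ < c_+, let μ, d_-, d_∘, d_+ be reals, and suppose that for all t ∈ {c_-+1, …, c_+} the signal satisfies f_t = μ + d_-·𝟙{t > θ_-} + d_∘·𝟙{t > θ} + d_+·𝟙{t > θ_+}. Set r_+ = max(0, c_+ − θ_+) and r_- = max(0, θ_- − c_-), and F_c = ∑_{t=c_-+1}^{c} (f_t − f̄_{(c_-+1):c_+}). Then: (1) for every integer c with max(c_-, θ_-) < c < θ one has F_c = −[(c−c_-)(c_+−θ)/(c_+−c_-)]·d_∘ − [(c−c_-)/(c_+−c_-)]·d_+ r_+ − [(c_+−c)/(c_+−c_-)]·d_- r_-, and 𝒳_{c_-,c,c_+}(f) = −√((c−c_-)(c_+−c)/(c_+−c_-)) · [ (c_+−θ) d_∘/(c_+−c) + r_+ d_+/(c_+−c) + r_- d_- /(c−c_-) ]; (2) for every integer c with θ ≤ c < min(c_+, θ_+) one has F_c = −[(c_+−c)(θ−c_-)/(c_+−c_-)]·d_∘ − [(c−c_-)/(c_+−c_-)]·d_+ r_+ − [(c_+−c)/(c_+−c_-)]·d_-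 r_-, and 𝒳_{c_-,c,c_+}(f) = −√((c−c_-)(c_+−c)/(c_+−c_-)) · [ (θ−c_-) d_∘/(c−c_-) + r_+ d_+/(c_+−c) + r_- d_- /(c−c_-) ]. -/
import Mathlib


open Finset

/-- Mean of `f` over the integer interval `(s, e]`. -/
noncomputable def segMeanZ (f : ℤ → ℝ) (s e : ℤ) : ℝ :=
  (∑ t ∈ Finset.Ioc s e, f t) / ((e : ℝ) - (s : ℝ))

/-- CUSUM statistic of `f` at split point `b` on the integer interval `(s, e]`. -/
noncomputable def cusumZ (f : ℤ → ℝ) (s b e : ℤ) : ℝ :=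
  Real.sqrt (((b : ℝ) - s) * ((e : ℝ) - b) / ((e : ℝ) - s)) *
    (segMeanZ f s b - segMeanZ f b e)

lemma sum_ite_Ioc (s e a : ℤ) (d : ℝ) :
    ∑ t ∈ Finset.Ioc s e, (if a < t then d else 0) = ((e - max s a).toNat : ℝ) * d := by
  rw [← Finset.sum_filter]
  have h : (Finset.Ioc s e).filter (fun t => a < t) = Finset.Ioc (max s a) e := by
    ext t
    simp only [Finset.mem_filter, Finset.mem_Ioc, max_lt_iff]
    omega
  rw [h, Finset.sum_const, Int.card_Ioc]
  simp [nsmul_eq_mul]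

/-- Lemma B.1: explicit form of the centered partial sums
`F_c = ∑_{t=c_-+1}^{c} (f_t − f̄_{(c_-+1):c_+})` and of the CUSUM statistic
`𝒳_{c_-,c,c_+}(f)` for a signal with change points `θ_- < θ < θ_+`, on either
side of the middle change point `θ`. -/
theorem cusum_signal_three_changes
    (cm cp θm θ θp : ℤ) (hθm : θm < θ) (hθp : θ < θp)
    (hcm : cm < θ) (hcp : θ < cp)
    (μ dm d0 dp : ℝ) (f : ℤ → ℝ)
    (hf : ∀ t ∈ Finset.Ioc cm cp,
      f t = μ + (if θm < t then dm else 0) + (if θ < t then d0 else 0)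
        + (if θp < t then dp else 0))
    (rp rm : ℤ) (hrp : rp = max 0 (cp - θp)) (hrm : rm = max 0 (θm - cm)) :
    (∀ c : ℤ, max cm θm < c → c < θ →
      ((∑ t ∈ Finset.Ioc cm c, (f t - segMeanZ f cm cp)) =
          -((((c : ℝ) - cm) * ((cp : ℝ) - θ)) / ((cp : ℝ) - cm)) * d0
          - (((c : ℝ) - cm) / ((cp : ℝ) - cm)) * (dp * rp)
          - (((cp : ℝ) - c) / ((cp : ℝ) - cm)) * (dm * rm)
        ∧ cusumZ f cm c cp =
          -Real.sqrt ((((c : ℝ) - cm) * ((cp : ℝ) - c)) / ((cp : ℝ) - cm)) *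
            ((((cp : ℝ) - θ) * d0) / ((cp : ℝ) - c)
              + ((rp : ℝ) * dp) / ((cp : ℝ) - c)
              + ((rm : ℝ) * dm) / ((c : ℝ) - cm))))
    ∧
    (∀ c : ℤ, θ ≤ c → c < min cp θp →
      ((∑ t ∈ Finset.Ioc cm c, (f t - segMeanZ f cm cp)) =
          -((((cp : ℝ) - c) * ((θ : ℝ) - cm)) / ((cp : ℝ) - cm)) * d0
          - (((c : ℝ) - cm) / ((cp : ℝ) - cm)) * (dp * rp)
          - (((cp : ℝ) - c) / ((cp : ℝ) - cm)) * (dm * rm)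
        ∧ cusumZ f cm c cp =
          -Real.sqrt ((((c : ℝ) - cm) * ((cp : ℝ) - c)) / ((cp : ℝ) - cm)) *
            ((((θ : ℝ) - cm) * d0) / ((c : ℝ) - cm)
              + ((rp : ℝ) * dp) / ((cp : ℝ) - c)
              + ((rm : ℝ) * dm) / ((c : ℝ) - cm)))) := by
  have Ssum : ∀ c : ℤ, cm ≤ c → c ≤ cp →
      ∑ t ∈ Finset.Ioc cm c, f t =
        ((c : ℝ) - cm) * μ + ((c - max cm θm).toNat : ℝ) * dm
          + ((c - max cm θ).toNat : ℝ) * d0 + ((c - max cm θp).toNat : ℝ) * dp := by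
    intro c h1 h2
    have hsub : Finset.Ioc cm c ⊆ Finset.Ioc cm cp := Finset.Ioc_subset_Ioc_right h2
    rw [Finset.sum_congr rfl (fun t ht => hf t (hsub ht))]
    rw [Finset.sum_add_distrib, Finset.sum_add_distrib, Finset.sum_add_distrib,
        Finset.sum_const, Int.card_Ioc, sum_ite_Ioc, sum_ite_Ioc, sum_ite_Ioc,
        nsmul_eq_mul]
    have : (((c - cm).toNat : ℕ) : ℝ) = (c : ℝ) - cm := by
      have : ((c - cm).toNat : ℤ) = c - cm := Int.toNat_of_nonneg (by omega)
      exact_mod_cast this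
    rw [this]
  have hcmcp : (cm : ℝ) < cp := by exact_mod_cast lt_trans hcm hcp
  have hcmcp' : (cp : ℝ) - cm ≠ 0 := by linarith
  constructor
  · intro c hc1 hc2
    have hc1' : cm < c := lt_of_le_of_lt (le_max_left _ _) hc1
    have hccp : c < cp := lt_trans hc2 hcp
    have hcR : (cm : ℝ) < c := by exact_mod_cast hc1'
    have hcR' : (c : ℝ) < cp := by exact_mod_cast hccp
    have hne1 : (c : ℝ) - cm ≠ 0 := by linarith
    have hne2 : (cp : ℝ) - c ≠ 0 := by linarith
    have hSc := Ssum c (le_of_lt hc1') (le_of_lt hccp)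
    have hScp := Ssum cp (by omega) le_rfl
    have n1 : (((c - max cm θm).toNat : ℕ) : ℝ) = (c : ℝ) - cm - rm := by
      have : ((c - max cm θm).toNat : ℤ) = c - cm - rm := by omega
      exact_mod_cast this
    have n2 : (((c - max cm θ).toNat : ℕ) : ℝ) = 0 := by
      have : ((c - max cm θ).toNat : ℤ) = 0 := by omega
      exact_mod_cast this
    have n3 : (((c - max cm θp).toNat : ℕ) : ℝ) = 0 := by
      have : ((c - max cm θp).toNat : ℤ) = 0 := by omega
      exact_mod_cast this
    have m1 : (((cp - max cm θm).toNat : ℕ) : ℝ) = (cp : ℝ) - cm - rm := by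
      have : ((cp - max cm θm).toNat : ℤ) = cp - cm - rm := by omega
      exact_mod_cast this
    have m2 : (((cp - max cm θ).toNat : ℕ) : ℝ) = (cp : ℝ) - θ := by
      have : ((cp - max cm θ).toNat : ℤ) = cp - θ := by omega
      exact_mod_cast this
    have m3 : (((cp - max cm θp).toNat : ℕ) : ℝ) = (rp : ℝ) := by
      have : ((cp - max cm θp).toNat : ℤ) = rp := by omega
      exact_mod_cast this
    rw [n1, n2, n3] at hSc
    rw [m1, m2, m3] at hScp
    have hsplit : ∑ t ∈ Finset.Ioc c cp, f t =
        (∑ t ∈ Finset.Ioc cm cp, f t) - ∑ t ∈ Finset.Ioc cm c, f t := by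
      have hunion : Finset.Ioc cm c ∪ Finset.Ioc c cp = Finset.Ioc cm cp :=
        Finset.Ioc_union_Ioc_eq_Ioc (le_of_lt hc1') (le_of_lt hccp)
      have hdisj : Disjoint (Finset.Ioc cm c) (Finset.Ioc c cp) := by
        rw [Finset.disjoint_left]
        intro t ht ht'
        simp only [Finset.mem_Ioc] at ht ht'
        omega
      rw [← hunion, Finset.sum_union hdisj]
      ring
    constructor
    · rw [Finset.sum_sub_distrib, Finset.sum_const, Int.card_Ioc, nsmul_eq_mul]
      have hcast : (((c - cm).toNat : ℕ) : ℝ) = (c : ℝ) - cm := by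
        have : ((c - cm).toNat : ℤ) = c - cm := by omega
        exact_mod_cast this
      rw [hcast, hSc]
      unfold segMeanZ
      rw [hScp]
      field_simp
      ring
    · have key : segMeanZ f cm c - segMeanZ f c cp =
          -((((cp : ℝ) - θ) * d0) / ((cp : ℝ) - c)
              + ((rp : ℝ) * dp) / ((cp : ℝ) - c)
              + ((rm : ℝ) * dm) / ((c : ℝ) - cm)) := by
        unfold segMeanZ
        rw [hsplit, hSc, hScp]
        field_simp
        ring
      unfold cusumZ
      rw [key]
      ring
  · intro c hc1 hc2
    have hc1' : cm < c := lt_of_lt_of_le hcm hc1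
    have hccp : c < cp := lt_of_lt_of_le hc2 (min_le_left _ _)
    have hcθp : c < θp := lt_of_lt_of_le hc2 (min_le_right _ _)
    have hcR : (cm : ℝ) < c := by exact_mod_cast hc1'
    have hcR' : (c : ℝ) < cp := by exact_mod_cast hccp
    have hne1 : (c : ℝ) - cm ≠ 0 := by linarith
    have hne2 : (cp : ℝ) - c ≠ 0 := by linarith
    have hSc := Ssum c (le_of_lt hc1') (le_of_lt hccp)
    have hScp := Ssum cp (by omega) le_rfl
    have n1 : (((c - max cm θm).toNat : ℕ) : ℝ) = (c : ℝ) - cm - rm := by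
      have : ((c - max cm θm).toNat : ℤ) = c - cm - rm := by omega
      exact_mod_cast this
    have n2 : (((c - max cm θ).toNat : ℕ) : ℝ) = (c : ℝ) - θ := by
      have : ((c - max cm θ).toNat : ℤ) = c - θ := by omega
      exact_mod_cast this
    have n3 : (((c - max cm θp).toNat : ℕ) : ℝ) = 0 := by
      have : ((c - max cm θp).toNat : ℤ) = 0 := by omega
      exact_mod_cast this
    have m1 : (((cp - max cm θm).toNat : ℕ) : ℝ) = (cp : ℝ) - cm - rm := by
      have : ((cp - max cm θm).toNat : ℤ) = cp - cm - rm := by omega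
      exact_mod_cast this
    have m2 : (((cp - max cm θ).toNat : ℕ) : ℝ) = (cp : ℝ) - θ := by
      have : ((cp - max cm θ).toNat : ℤ) = cp - θ := by omega
      exact_mod_cast this
    have m3 : (((cp - max cm θp).toNat : ℕ) : ℝ) = (rp : ℝ) := by
      have : ((cp - max cm θp).toNat : ℤ) = rp := by omega
      exact_mod_cast this
    rw [n1, n2, n3] at hSc
    rw [m1, m2, m3] at hScp
    have hsplit : ∑ t ∈ Finset.Ioc c cp, f t =
        (∑ t ∈ Finset.Ioc cm cp, f t) - ∑ t ∈ Finset.Ioc cm c, f t := by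
      have hunion : Finset.Ioc cm c ∪ Finset.Ioc c cp = Finset.Ioc cm cp :=
        Finset.Ioc_union_Ioc_eq_Ioc (le_of_lt hc1') (le_of_lt hccp)
      have hdisj : Disjoint (Finset.Ioc cm c) (Finset.Ioc c cp) := by
        rw [Finset.disjoint_left]
        intro t ht ht'
        simp only [Finset.mem_Ioc] at ht ht'
        omega
      rw [← hunion, Finset.sum_union hdisj]
      ring
    constructor
    · rw [Finset.sum_sub_distrib, Finset.sum_const, Int.card_Ioc, nsmul_eq_mul]
      have hcast : (((c - cm).toNat : ℕ) : ℝ) = (c : ℝ) - cm := by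
        have : ((c - cm).toNat : ℤ) = c - cm := by omega
        exact_mod_cast this
      rw [hcast, hSc]
      unfold segMeanZ
      rw [hScp]
      field_simp
      ring
    · have key : segMeanZ f cm c - segMeanZ f c cp =
          -((((θ : ℝ) - cm) * d0) / ((c : ℝ) - cm)
              + ((rp : ℝ) * dp) / ((cp : ℝ) - c)
              + ((rm : ℝ) * dm) / ((c : ℝ) - cm)) := by
        unfold segMeanZ
        rw [hsplit, hSc, hScp]
        field_simp
        ring
      unfold cusumZ
      rw [key]
      ring
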